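/- For all integers d ≥ 2 and m ≥ 0, one has C(m+d−1, d−1) > (d/(d!)^{1/d}) · C(m+d+1, d)^{1−1/d} · (1 − d/(m+d+1))², where the powers are real powers. -/

import Mathlib

lemma key_nat (d m : ℕ) (hd : 2 ≤ d) :
    d ^ d * ((m + d + 1).choose d) ^ (d - 1) * (m + 1) ^ (2 * d) <
      ((m + d - 1).choose (d - 1)) ^ d * d.factorial * (m + d + 1) ^ (2 * d) := by
  obtain ⟨e, rfl⟩ : ∃ e, d = e + 1 := ⟨d - 1, by omega⟩
  have he : 1 ≤ e := by omega
  have hm1 : m + (e + 1) - 1 = m + e := by omega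
  have hm2 : e + 1 - 1 = e := by omega
  rw [hm1, hm2]
  set a := (m + e).choose e with ha_def
  set b := (m + e + 1).choose (e + 1) with hb_def
  set n := (m + (e + 1) + 1).choose (e + 1) with hn_def
  have ha : 0 < a := Nat.choose_pos (Nat.le_add_left e m)
  -- h1 : (m+e+2) * b = n * (m+1)
  have h1 : (m + e + 2) * b = n * (m + 1) := by
    have t1 := Nat.add_one_mul_choose_eq (m + e + 1) (e + 1)
    have t2 := Nat.choose_succ_right_eq (m + e + 2) (e + 1)
    have t3 : m + e + 2 - (e + 1) = m + 1 := by omega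
    have t4 : m + (e + 1) + 1 = m + e + 2 := by omega
    rw [t3] at t2
    rw [hn_def, t4]
    calc (m + e + 2) * b = Nat.succ (m + e + 1) * (m + e + 1).choose (e + 1) := rfl
      _ = (m + e + 2).choose (e + 2) * (e + 2) := t1
      _ = (m + e + 2).choose (e + 1) * (m + 1) := t2
  -- h2 : (m+e+1) * a = b * (e+1)
  have h2 : (m + e + 1) * a = b * (e + 1) := Nat.add_one_mul_choose_eq (m + e) e
  -- h3 : (m+1)^e ≤ e! * a
  have h3 : (m + 1) ^ e ≤ e.factorial * a := by
    have t := Nat.pow_sub_le_descFactorial (m + e) e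
    rw [Nat.descFactorial_eq_factorial_mul_choose] at t
    have : m + e + 1 - e = m + 1 := by omega
    rwa [this] at t
  have t4 : m + (e + 1) + 1 = m + e + 2 := by omega
  rw [t4]
  have hc : 0 < (m + 1) ^ e * (e + 1) ^ e := by positivity
  rw [← Nat.mul_lt_mul_right hc]
  have lhs_eq : (e + 1) ^ (e + 1) * n ^ e * (m + 1) ^ (2 * (e + 1)) *
      ((m + 1) ^ e * (e + 1) ^ e) =
      a ^ e * ((e + 1) ^ (e + 1) * (m + e + 2) ^ e * (m + e + 1) ^ e *
        (m + 1) ^ (2 * (e + 1))) := by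
    calc (e + 1) ^ (e + 1) * n ^ e * (m + 1) ^ (2 * (e + 1)) * ((m + 1) ^ e * (e + 1) ^ e)
        = (e + 1) ^ (e + 1) * (e + 1) ^ e * (n * (m + 1)) ^ e * (m + 1) ^ (2 * (e + 1)) := by
          rw [mul_pow]; ring
      _ = (e + 1) ^ (e + 1) * (e + 1) ^ e * ((m + e + 2) * b) ^ e * (m + 1) ^ (2 * (e + 1)) := by
          rw [h1]
      _ = (e + 1) ^ (e + 1) * (m + e + 2) ^ e * (b * (e + 1)) ^ e * (m + 1) ^ (2 * (e + 1)) := by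
          rw [mul_pow, mul_pow]; ring
      _ = (e + 1) ^ (e + 1) * (m + e + 2) ^ e * ((m + e + 1) * a) ^ e *
            (m + 1) ^ (2 * (e + 1)) := by rw [h2]
      _ = a ^ e * ((e + 1) ^ (e + 1) * (m + e + 2) ^ e * (m + e + 1) ^ e *
            (m + 1) ^ (2 * (e + 1))) := by rw [mul_pow]; ring
  have rhs_eq : a ^ (e + 1) * (e + 1).factorial * (m + e + 2) ^ (2 * (e + 1)) *
      ((m + 1) ^ e * (e + 1) ^ e) =
      a ^ e * ((e.factorial * a) * ((e + 1) ^ (e + 1) * (m + e + 2) ^ (2 * (e + 1)) *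
        (m + 1) ^ e)) := by
    rw [Nat.factorial_succ]; ring
  rw [lhs_eq, rhs_eq]
  apply Nat.mul_lt_mul_of_le_of_lt (le_refl _) _ (by positivity)
  -- inner strict inequality
  have hstrict : (m + e + 1) ^ e * (m + 1) ^ 2 < (m + e + 2) ^ e * (m + e + 2) ^ 2 := by
    exact Nat.mul_lt_mul_of_lt_of_le
      (Nat.pow_lt_pow_left (by omega) (by omega))
      (Nat.pow_le_pow_left (by omega) 2) (by positivity)
  calc (e + 1) ^ (e + 1) * (m + e + 2) ^ e * (m + e + 1) ^ e * (m + 1) ^ (2 * (e + 1))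
      = ((e + 1) ^ (e + 1) * (m + e + 2) ^ e * (m + 1) ^ e * (m + 1) ^ e) *
          ((m + e + 1) ^ e * (m + 1) ^ 2) := by ring
    _ < ((e + 1) ^ (e + 1) * (m + e + 2) ^ e * (m + 1) ^ e * (m + 1) ^ e) *
          ((m + e + 2) ^ e * (m + e + 2) ^ 2) := by
        exact Nat.mul_lt_mul_of_le_of_lt (le_refl _) hstrict (by positivity)
    _ = (m + 1) ^ e * ((e + 1) ^ (e + 1) * (m + e + 2) ^ (2 * (e + 1)) * (m + 1) ^ e) := by
        ring
    _ ≤ (e.factorial * a) * ((e + 1) ^ (e + 1) * (m + e + 2) ^ (2 * (e + 1)) * (m + 1) ^ e) := by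
        exact Nat.mul_le_mul_right _ h3


theorem stmt_8 (d m : ℕ) (hd : 2 ≤ d) :
    ((d : ℝ) / (Nat.factorial d : ℝ) ^ ((1 : ℝ) / (d : ℝ))) *
        (Nat.choose (m + d + 1) d : ℝ) ^ (1 - 1 / (d : ℝ)) *
        (1 - (d : ℝ) / ((m : ℝ) + (d : ℝ) + 1)) ^ 2 <
      (Nat.choose (m + d - 1) (d - 1) : ℝ) := by
  have hd0 : (d : ℝ) ≠ 0 := by positivity
  have hdm : (0:ℝ) < (m:ℝ) + d + 1 := by positivity
  have hA : (0:ℝ) ≤ ((m + d - 1).choose (d - 1) : ℝ) := by positivity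
  refine lt_of_pow_lt_pow_left₀ d hA ?_
  have e1 : ((d : ℝ) / (Nat.factorial d : ℝ) ^ ((1 : ℝ) / (d : ℝ))) ^ d
      = (d : ℝ) ^ d / (Nat.factorial d : ℝ) := by
    rw [div_pow, ← Real.rpow_natCast ((Nat.factorial d : ℝ) ^ ((1:ℝ)/(d:ℝ))) d,
      ← Real.rpow_mul (by positivity), one_div_mul_cancel hd0, Real.rpow_one]
  have e2 : ((Nat.choose (m + d + 1) d : ℝ) ^ (1 - 1 / (d : ℝ))) ^ d
      = (Nat.choose (m + d + 1) d : ℝ) ^ (d - 1 : ℕ) := by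
    rw [← Real.rpow_natCast ((Nat.choose (m + d + 1) d : ℝ) ^ (1 - 1/(d:ℝ))) d,
      ← Real.rpow_mul (by positivity)]
    have : (1 - 1 / (d:ℝ)) * d = ((d - 1 : ℕ) : ℝ) := by
      have : ((d - 1 : ℕ) : ℝ) = (d : ℝ) - 1 := by
        have : 1 ≤ d := by omega
        push_cast [this]; ring
      rw [this]; field_simp
    rw [this, Real.rpow_natCast]
  have e3 : (1 - (d:ℝ) / ((m:ℝ) + d + 1)) = ((m:ℝ) + 1) / ((m:ℝ) + d + 1) := by
    field_simp
    ring
  rw [mul_pow, mul_pow, e1, e2, e3, ← pow_mul, div_pow]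
  have lhs_eq : (d:ℝ) ^ d / (Nat.factorial d : ℝ) * ((m + d + 1).choose d : ℝ) ^ (d - 1) *
      (((m:ℝ)+1) ^ (2*d) / ((m:ℝ)+d+1) ^ (2*d)) =
      ((d:ℝ) ^ d * ((m + d + 1).choose d : ℝ) ^ (d - 1) * ((m:ℝ)+1) ^ (2*d)) /
        ((Nat.factorial d : ℝ) * ((m:ℝ)+d+1) ^ (2*d)) := by ring
  rw [lhs_eq, div_lt_iff₀ (by positivity)]
  have key := key_nat d m hd
  have keyR : (d:ℝ) ^ d * ((m + d + 1).choose d : ℝ) ^ (d - 1) * ((m:ℝ) + 1) ^ (2 * d) <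
      ((m + d - 1).choose (d - 1) : ℝ) ^ d * (d.factorial : ℝ) * ((m:ℝ) + d + 1) ^ (2 * d) := by
    exact_mod_cast key
  calc (d:ℝ) ^ d * ((m + d + 1).choose d : ℝ) ^ (d-1) * ((m:ℝ)+1) ^ (2*d)
      < ((m + d - 1).choose (d - 1) : ℝ) ^ d * (d.factorial : ℝ) * ((m:ℝ) + d + 1) ^ (2 * d) := keyR
    _ = ((m + d - 1).choose (d - 1) : ℝ) ^ d * ((Nat.factorial d : ℝ) * (((m:ℝ)+d+1) ^ (2*d))) := by ring
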